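/- Let π=(μ,x,y) and π'=(μ',x',y') be two externally stable matching profiles of the same matching game satisfying condition (**): for every man i, if u_i(π) = u_i(π') then i has the same partner (or is single) in μ and μ', and for every woman j, if v_j(π) = v_j(π') then j has the same partner (or is single) in μ and μ'. Define π∨ = (μ∨,x∨,y∨) by matching each man i as in whichever of π, π' gives him the greater utility (leaving him single if that is his better option), each matched man and his partner playing the strategy pair from that profile. Then μ∨ is a well-defined matching (no woman is assigned to two different men) and π∨ is externally stable. -/

import Mathlib

/-- A (one-to-one, possibly partial) matching between two sides `M` and `W`. -/
structure Matching (M W : Type*) where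
  muM : M → Option W
  muW : W → Option M
  coherent : ∀ i j, muM i = some j ↔ muW j = some i

variable {M W : Type*} {X : M → Type*} {Y : W → Type*}

/-- Utility of man `i` in the matching profile `(μ,x,y)`. -/
def uMan (U : ∀ i j, X i → Y j → ℝ) (ubar : M → ℝ)
    (μ : Matching M W) (x : ∀ i, X i) (y : ∀ j, Y j) (i : M) : ℝ :=
  (μ.muM i).elim (ubar i) fun j => U i j (x i) (y j)

/-- Utility of woman `j` in the matching profile `(μ,x,y)`. -/
def vWoman (V : ∀ i j, X i → Y j → ℝ) (vbar : W → ℝ)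
    (μ : Matching M W) (x : ∀ i, X i) (y : ∀ j, Y j) (j : W) : ℝ :=
  (μ.muW j).elim (vbar j) fun i => V i j (x i) (y j)

/-- External stability of a matching profile: individual rationality plus the
absence of blocking pairs. -/
def ExternallyStable (U V : ∀ i j, X i → Y j → ℝ) (ubar : M → ℝ) (vbar : W → ℝ)
    (μ : Matching M W) (x : ∀ i, X i) (y : ∀ j, Y j) : Prop :=
  (∀ i, ubar i ≤ uMan U ubar μ x y i) ∧
  (∀ j, vbar j ≤ vWoman V vbar μ x y j) ∧
  ∀ i j, μ.muM i ≠ some j → ∀ (s : X i) (t : Y j),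
    ¬ (uMan U ubar μ x y i < U i j s t ∧ vWoman V vbar μ x y j < V i j s t)

/-- Under condition (**), the men-maximum of two externally stable matching
profiles is a well-defined matching and, together with the corresponding
strategies, is externally stable. -/
theorem men_max_externally_stable
    {M W : Type*} [Fintype M] [Fintype W]
    {X : M → Type*} {Y : W → Type*}
    [∀ i, TopologicalSpace (X i)] [∀ i, CompactSpace (X i)] [∀ i, Nonempty (X i)]
    [∀ j, TopologicalSpace (Y j)] [∀ j, CompactSpace (Y j)] [∀ j, Nonempty (Y j)]
    (U V : ∀ i j, X i → Y j → ℝ)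
    (hU : ∀ i j, Continuous fun p : X i × Y j => U i j p.1 p.2)
    (hV : ∀ i j, Continuous fun p : X i × Y j => V i j p.1 p.2)
    (ubar : M → ℝ) (vbar : W → ℝ)
    (μ μ' : Matching M W) (x x' : ∀ i, X i) (y y' : ∀ j, Y j)
    (hstab : ExternallyStable U V ubar vbar μ x y)
    (hstab' : ExternallyStable U V ubar vbar μ' x' y')
    -- condition (**) for men
    (hssM : ∀ i, uMan U ubar μ x y i = uMan U ubar μ' x' y' i → μ.muM i = μ'.muM i)
    -- condition (**) for women
    (hssW : ∀ j, vWoman V vbar μ x y j = vWoman V vbar μ' x' y' j → μ.muW j = μ'.muW j) :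
    ∃ ν : Matching M W,
      -- each man is matched as in whichever of the two profiles gives him the
      -- greater utility (at a tie the two agree by (**))
      (∀ i, uMan U ubar μ' x' y' i ≤ uMan U ubar μ x y i → ν.muM i = μ.muM i) ∧
      (∀ i, uMan U ubar μ x y i ≤ uMan U ubar μ' x' y' i → ν.muM i = μ'.muM i) ∧
      -- any choice of strategies in which every matched couple plays the strategy
      -- pair coming from the selected (better-for-the-man) profile, strategies of
      -- unmatched agents being arbitrary, yields an externally stable profile
      ∀ (xv : ∀ i, X i) (yv : ∀ j, Y j),
        (∀ i j, ν.muM i = some j →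
          ((uMan U ubar μ' x' y' i ≤ uMan U ubar μ x y i ∧ xv i = x i ∧ yv j = y j) ∨
           (uMan U ubar μ x y i ≤ uMan U ubar μ' x' y' i ∧ xv i = x' i ∧ yv j = y' j))) →
        ExternallyStable U V ubar vbar ν xv yv := by
  classical
  obtain ⟨hIRu, hIRv, hblk⟩ := hstab
  obtain ⟨hIRu', hIRv', hblk'⟩ := hstab'
  set u : M → ℝ := uMan U ubar μ x y with hu
  set u' : M → ℝ := uMan U ubar μ' x' y' with hu'
  set v : W → ℝ := vWoman V vbar μ x y with hvdef
  set v' : W → ℝ := vWoman V vbar μ' x' y' with hv'def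
  -- unfolding lemmas
  have hum : ∀ i j, μ.muM i = some j → u i = U i j (x i) (y j) := by
    intro i j h; simp [hu, uMan, h]
  have hum' : ∀ i j, μ'.muM i = some j → u' i = U i j (x' i) (y' j) := by
    intro i j h; simp [hu', uMan, h]
  have hun' : ∀ i, μ'.muM i = none → u' i = ubar i := by
    intro i h; simp [hu', uMan, h]
  have hvm : ∀ i j, μ.muW j = some i → v j = V i j (x i) (y j) := by
    intro i j h; simp [hvdef, vWoman, h]
  have hvm' : ∀ i j, μ'.muW j = some i → v' j = V i j (x' i) (y' j) := by
    intro i j h; simp [hv'def, vWoman, h]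
  have hvn : ∀ j, μ.muW j = none → v j = vbar j := by
    intro j h; simp [hvdef, vWoman, h]
  have hvn' : ∀ j, μ'.muW j = none → v' j = vbar j := by
    intro j h; simp [hv'def, vWoman, h]
  -- step lemmas
  have manMatched : ∀ i, u i < u' i → ∃ j2, μ'.muM i = some j2 := by
    intro i hlt
    cases h : μ'.muM i with
    | none =>
      have hle : u' i ≤ u i := by rw [hun' i h]; exact hIRu i
      exact absurd hlt hle.not_gt
    | some j2 => exact ⟨j2, rfl⟩
  have manStep : ∀ i j2, u i < u' i → μ'.muM i = some j2 → μ.muM i ≠ some j2 →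
      v' j2 < v j2 := by
    intro i j2 hlt hm' hm
    rcases lt_trichotomy (v' j2) (v j2) with h | h | h
    · exact h
    · exfalso
      have hw := hssW j2 h.symm
      have hc : μ'.muW j2 = some i := (μ'.coherent i j2).mp hm'
      rw [← hw] at hc
      exact hm ((μ.coherent i j2).mpr hc)
    · exfalso
      refine hblk i j2 hm (x' i) (y' j2) ⟨?_, ?_⟩
      · rw [← hum' i j2 hm']; exact hlt
      · rw [← hvm' i j2 ((μ'.coherent i j2).mp hm')]; exact h
  have womanMatched : ∀ j, v' j < v j → ∃ i2, μ.muW j = some i2 := by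
    intro j hlt
    cases h : μ.muW j with
    | none =>
      have hle : v j ≤ v' j := by rw [hvn j h]; exact hIRv' j
      exact absurd hlt (not_lt.mpr hle)
    | some i2 => exact ⟨i2, rfl⟩
  have womanStep : ∀ j i2, v' j < v j → μ.muW j = some i2 → μ'.muW j ≠ some i2 →
      u i2 < u' i2 := by
    intro j i2 hlt hm hm'
    rcases lt_trichotomy (u i2) (u' i2) with h | h | h
    · exact h
    · exfalso
      have hw := hssM i2 h
      have hc : μ.muM i2 = some j := (μ.coherent i2 j).mpr hm
      rw [hw] at hc
      exact hm' ((μ'.coherent i2 j).mp hc)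
    · exfalso
      have hne : μ'.muM i2 ≠ some j := fun hc => hm' ((μ'.coherent i2 j).mp hc)
      refine hblk' i2 j hne (x i2) (y j) ⟨?_, ?_⟩
      · rw [← hum i2 j ((μ.coherent i2 j).mpr hm)]; exact h
      · rw [← hvm i2 j hm]; exact hlt
  -- the decomposition/chain argument: a woman matched in both profiles cannot
  -- simultaneously be abandoned by a man strictly preferring μ' and have her
  -- μ'-partner weakly preferring μ.
  have noAbandon : ∀ j0 ia ib, μ.muW j0 = some ia → μ'.muW j0 = some ib →
      u ia < u' ia → u' ib ≤ u ib → False := by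
    intro j0 ia ib hja hjb hialt hible
    have hGoodE : ∀ p : M × W, μ.muM p.1 = some p.2 → u p.1 < u' p.1 →
        μ'.muW p.2 ≠ some p.1 →
        ∃ q : M × W, μ'.muM p.1 = some q.2 ∧ μ.muW q.2 = some q.1 := by
      intro p h1 h2 h3
      obtain ⟨j2, hj2⟩ := manMatched p.1 h2
      have hne : μ.muM p.1 ≠ some j2 := by
        intro hc
        have hj : p.2 = j2 := Option.some.inj (h1.symm.trans hc)
        exact h3 (by rw [hj]; exact (μ'.coherent p.1 j2).mp hj2)
      obtain ⟨i2, hi2⟩ := womanMatched j2 (manStep p.1 j2 h2 hj2 hne)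
      exact ⟨(i2, j2), hj2, hi2⟩
    set stp : M × W → M × W := fun p =>
      if h : ∃ q : M × W, μ'.muM p.1 = some q.2 ∧ μ.muW q.2 = some q.1 then h.choose
      else p with hstpdef
    set Good : M × W → Prop := fun p =>
      μ.muM p.1 = some p.2 ∧ u p.1 < u' p.1 ∧ μ'.muW p.2 ≠ some p.1 with hGooddef
    have hstepSpec : ∀ p, Good p → Good (stp p) ∧ μ'.muW ((stp p).2) = some p.1 := by
      intro p hp
      obtain ⟨h1, h2, h3⟩ := hp
      have hex := hGoodE p h1 h2 h3
      have hq : μ'.muM p.1 = some (stp p).2 ∧ μ.muW (stp p).2 = some (stp p).1 := by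
        simp only [hstpdef, dif_pos hex]
        exact hex.choose_spec
      have hlinkp : μ'.muW (stp p).2 = some p.1 := (μ'.coherent p.1 _).mp hq.1
      have hwne : (stp p).2 ≠ p.2 := by
        intro hc; rw [hc] at hlinkp; exact h3 hlinkp
      have hmne : μ.muM p.1 ≠ some (stp p).2 := by
        rw [h1]; intro hc; exact hwne (Option.some.inj hc).symm
      have hvlt := manStep p.1 (stp p).2 h2 hq.1 hmne
      have hg1 : μ.muM (stp p).1 = some (stp p).2 := (μ.coherent _ _).mpr hq.2
      have hmanne : (stp p).1 ≠ p.1 := by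
        intro hc; rw [hc, h1] at hg1; exact hwne (Option.some.inj hg1).symm
      have hwne' : μ'.muW (stp p).2 ≠ some (stp p).1 := by
        rw [hlinkp]; intro hc; exact hmanne (Option.some.inj hc).symm
      exact ⟨⟨hg1, womanStep _ _ hvlt hq.2 hwne', hwne'⟩, hlinkp⟩
    set seq : ℕ → M × W := fun k => Nat.rec (ia, j0) (fun _ p => stp p) k with hseqdef
    have hseqS : ∀ k, seq (k+1) = stp (seq k) := fun k => rfl
    have hGood0 : Good (ia, j0) := by
      refine ⟨(μ.coherent ia j0).mpr hja, hialt, ?_⟩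
      show μ'.muW j0 ≠ some ia
      rw [hjb]; intro hc
      have hba : ib = ia := Option.some.inj hc
      rw [hba] at hible
      exact absurd hialt (not_lt.mpr hible)
    have hGoodAll : ∀ k, Good (seq k) := by
      intro k; induction k with
      | zero => exact hGood0
      | succ k ih => rw [hseqS]; exact (hstepSpec _ ih).1
    have hlink : ∀ k, μ'.muW ((seq (k+1)).2) = some ((seq k).1) := by
      intro k; rw [hseqS]; exact (hstepSpec _ (hGoodAll k)).2
    have hbase : ∀ k, (seq (k+1)).2 ≠ j0 := by
      intro k hc
      have h := hlink k
      rw [hc] at h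
      have hiq : ib = (seq k).1 := Option.some.inj (hjb.symm.trans h)
      have hlt := (hGoodAll k).2.1
      rw [← hiq] at hlt
      exact absurd hlt (not_lt.mpr hible)
    have hwinj : ∀ a b, (seq (a+1)).2 = (seq (b+1)).2 → (seq a).2 = (seq b).2 := by
      intro a b hab
      have h1 := hlink a
      have h2 := hlink b
      rw [hab] at h1
      have hm : (seq a).1 = (seq b).1 := Option.some.inj (h1.symm.trans h2)
      have g1 := (hGoodAll a).1
      have g2 := (hGoodAll b).1
      rw [hm] at g1
      exact Option.some.inj (g1.symm.trans g2)
    have hnever : ∀ a d, (seq a).2 ≠ (seq (a + d + 1)).2 := by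
      intro a
      induction a with
      | zero =>
        intro d hc
        simp only [Nat.zero_add] at hc
        refine hbase d ?_
        rw [← hc, hseqdef]
        rfl
      | succ a ih =>
        intro d hc
        have he : a + 1 + d + 1 = (a + d + 1) + 1 := by omega
        rw [he] at hc
        exact ih d (hwinj a (a + d + 1) hc)
    obtain ⟨a, b, habne, heq⟩ := Finite.exists_ne_map_eq_of_infinite (fun k => (seq k).2)
    rcases habne.lt_or_gt with h | h
    · have hb : b = a + (b - a - 1) + 1 := by omega
      exact hnever a (b - a - 1) (by rw [← hb]; exact heq)
    · have ha : a = b + (a - b - 1) + 1 := by omega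
      exact hnever b (a - b - 1) (by rw [← ha]; exact heq.symm)
  -- the men-optimal assignment
  set νM : M → Option W := fun i => if u' i ≤ u i then μ.muM i else μ'.muM i with hνM
  have mixed : ∀ i1 i2 j, u' i1 ≤ u i1 → μ.muM i1 = some j →
      u i2 < u' i2 → μ'.muM i2 = some j → i1 = i2 := by
    intro i1 i2 j hc1 h1 hc2 h2
    by_contra hne
    have hw1 : μ.muW j = some i1 := (μ.coherent _ _).mp h1
    have hw2 : μ'.muW j = some i2 := (μ'.coherent _ _).mp h2
    have hne1 : μ'.muM i1 ≠ some j := by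
      intro hc
      exact hne (Option.some.inj (((μ'.coherent i1 j).mp hc).symm.trans hw2))
    have hne2 : μ.muM i2 ≠ some j := by
      intro hc
      exact hne (Option.some.inj (((μ.coherent i2 j).mp hc).symm.trans hw1)).symm
    rcases lt_trichotomy (v j) (v' j) with h | h | h
    · exact hblk i2 j hne2 (x' i2) (y' j)
        ⟨by rw [← hum' i2 j h2]; exact hc2, by rw [← hvm' i2 j hw2]; exact h⟩
    · have hw := hssW j h
      rw [hw] at hw1
      exact hne (Option.some.inj (hw1.symm.trans hw2))
    · rcases eq_or_lt_of_le hc1 with heq | hlt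
      · have hm := hssM i1 heq.symm
        rw [hm] at h1
        exact hne1 h1
      · exact hblk' i1 j hne1 (x i1) (y j)
          ⟨by rw [← hum i1 j h1]; exact hlt, by rw [← hvm i1 j hw1]; exact h⟩
  have hWellDef : ∀ i1 i2 j, νM i1 = some j → νM i2 = some j → i1 = i2 := by
    intro i1 i2 j h1 h2
    simp only [hνM] at h1 h2
    by_cases hc1 : u' i1 ≤ u i1 <;> by_cases hc2 : u' i2 ≤ u i2
    · rw [if_pos hc1] at h1; rw [if_pos hc2] at h2
      exact Option.some.inj (((μ.coherent i1 j).mp h1).symm.trans ((μ.coherent i2 j).mp h2))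
    · rw [if_pos hc1] at h1; rw [if_neg hc2] at h2
      exact mixed i1 i2 j hc1 h1 (not_le.mp hc2) h2
    · rw [if_neg hc1] at h1; rw [if_pos hc2] at h2
      exact (mixed i2 i1 j hc2 h2 (not_le.mp hc1) h1).symm
    · rw [if_neg hc1] at h1; rw [if_neg hc2] at h2
      exact Option.some.inj (((μ'.coherent i1 j).mp h1).symm.trans ((μ'.coherent i2 j).mp h2))
  set νW : W → Option M := fun j => if h : ∃ i, νM i = some j then some h.choose else none
    with hνW
  have hcoh : ∀ i j, νM i = some j ↔ νW j = some i := by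
    intro i j
    constructor
    · intro h
      have hex : ∃ i, νM i = some j := ⟨i, h⟩
      simp only [hνW, dif_pos hex]
      exact congrArg some (hWellDef _ _ j hex.choose_spec h)
    · intro h
      simp only [hνW] at h
      by_cases hex : ∃ i, νM i = some j
      · rw [dif_pos hex] at h
        rw [← Option.some.inj h]
        exact hex.choose_spec
      · rw [dif_neg hex] at h
        exact absurd h (by simp)
  refine ⟨⟨νM, νW, hcoh⟩, ?_, ?_, ?_⟩ <;>
    [skip; skip; skip]
  case _ =>
    intro i h
    show νM i = μ.muM i
    simp only [hνM]; rw [if_pos h]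
  case _ =>
    intro i h
    show νM i = μ'.muM i
    by_cases hc : u' i ≤ u i
    · have heq : u i = u' i := le_antisymm h hc
      simp only [hνM]; rw [if_pos hc]
      exact hssM i heq
    · simp only [hνM]; rw [if_neg hc]
  case _ =>
    intro xv yv hxy
    set ν : Matching M W := ⟨νM, νW, hcoh⟩ with hνdef
    have hνMeq : ∀ i, ν.muM i = νM i := fun i => rfl
    have hml : ∀ i, u' i ≤ u i → ν.muM i = μ.muM i := by
      intro i h; rw [hνMeq]; simp only [hνM]; rw [if_pos h]
    have hmr : ∀ i, u i ≤ u' i → ν.muM i = μ'.muM i := by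
      intro i h
      by_cases hc : u' i ≤ u i
      · have heq : u i = u' i := le_antisymm h hc
        rw [hml i hc]; exact hssM i heq
      · rw [hνMeq]; simp only [hνM]; rw [if_neg hc]
    have huv : ∀ i, uMan U ubar ν xv yv i = max (u i) (u' i) := by
      intro i
      by_cases hc : u' i ≤ u i
      · rw [max_eq_left hc]
        cases hm : μ.muM i with
        | none =>
          have hν0 : νM i = none := (hml i hc).trans hm
          have : u i = ubar i := by simp [hu, uMan, hm]
          simp [uMan, hνMeq, hν0, this]
        | some j =>
          have hν1 : ν.muM i = some j := (hml i hc).trans hm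
          have hν1' : νM i = some j := hν1
          have hval : uMan U ubar ν xv yv i = U i j (xv i) (yv j) := by
            simp [uMan, hν1, hν1']
          rcases hxy i j hν1 with ⟨_, hxv, hyv⟩ | ⟨hle, hxv, hyv⟩
          · rw [hval, hxv, hyv, ← hum i j hm]
          · have heq : u i = u' i := le_antisymm hle hc
            have hm' : μ'.muM i = some j := by rw [← hssM i heq]; exact hm
            rw [hval, hxv, hyv, ← hum' i j hm', ← heq]
      · have hlt := not_le.mp hc
        rw [max_eq_right hlt.le]
        cases hm : μ'.muM i with
        | none =>
          have hν0 : νM i = none := (hmr i hlt.le).trans hm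
          have : u' i = ubar i := hun' i hm
          simp [uMan, hνMeq, hν0, this]
        | some j =>
          have hν1 : ν.muM i = some j := (hmr i hlt.le).trans hm
          have hν1' : νM i = some j := hν1
          have hval : uMan U ubar ν xv yv i = U i j (xv i) (yv j) := by
            simp [uMan, hν1, hν1']
          rcases hxy i j hν1 with ⟨hle, hxv, hyv⟩ | ⟨_, hxv, hyv⟩
          · exact absurd hle hc
          · rw [hval, hxv, hyv, ← hum' i j hm]
    have hwv : ∀ j i, ν.muM i = some j →
        (μ.muM i = some j ∧ vWoman V vbar ν xv yv j = v j) ∨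
        (μ'.muM i = some j ∧ vWoman V vbar ν xv yv j = v' j) := by
      intro j i hν1
      have hνw : ν.muW j = some i := (ν.coherent i j).mp hν1
      have hνw' : νW j = some i := hνw
      have hval : vWoman V vbar ν xv yv j = V i j (xv i) (yv j) := by
        simp [vWoman, hνw, hνw']
      rcases hxy i j hν1 with ⟨hle, hxv, hyv⟩ | ⟨hle, hxv, hyv⟩
      · have hm : μ.muM i = some j := (hml i hle).symm.trans hν1
        exact Or.inl ⟨hm, by rw [hval, hxv, hyv, ← hvm i j ((μ.coherent _ _).mp hm)]⟩
      · have hm' : μ'.muM i = some j := (hmr i hle).symm.trans hν1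
        exact Or.inr ⟨hm', by rw [hval, hxv, hyv, ← hvm' i j ((μ'.coherent _ _).mp hm')]⟩
    refine ⟨fun i => ?_, fun j => ?_, ?_⟩
    · rw [huv i]
      exact (hIRu i).trans (le_max_left _ _)
    · cases hw : ν.muW j with
      | none =>
        have hw' : νW j = none := hw
        simp [vWoman, hw, hw']
      | some i =>
        rcases hwv j i ((ν.coherent i j).mpr hw) with ⟨_, hval⟩ | ⟨_, hval⟩
        · rw [hval]; exact hIRv j
        · rw [hval]; exact hIRv' j
    · rintro i j hne s t ⟨h1, h2⟩
      rw [huv i] at h1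
      have h1a : u i < U i j s t := (le_max_left _ _).trans_lt h1
      have h1b : u' i < U i j s t := (le_max_right _ _).trans_lt h1
      cases hw : ν.muW j with
      | some i1 =>
        have hν1 : ν.muM i1 = some j := (ν.coherent i1 j).mpr hw
        rcases hwv j i1 hν1 with ⟨hm, hval⟩ | ⟨hm, hval⟩
        · have hnem : μ.muM i ≠ some j := by
            intro hcc
            have : i = i1 := Option.some.inj
              (((μ.coherent i j).mp hcc).symm.trans ((μ.coherent i1 j).mp hm))
            rw [← this] at hν1
            exact hne hν1
          exact hblk i j hnem s t ⟨h1a, by rw [← hval]; exact h2⟩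
        · have hnem : μ'.muM i ≠ some j := by
            intro hcc
            have : i = i1 := Option.some.inj
              (((μ'.coherent i j).mp hcc).symm.trans ((μ'.coherent i1 j).mp hm))
            rw [← this] at hν1
            exact hne hν1
          exact hblk' i j hnem s t ⟨h1b, by rw [← hval]; exact h2⟩
      | none =>
        have hw' : νW j = none := hw
        have hvaln : vWoman V vbar ν xv yv j = vbar j := by simp [vWoman, hw, hw']
        rw [hvaln] at h2
        have hnoν : ∀ i0, ν.muM i0 ≠ some j := by
          intro i0 hcc
          exact Option.some_ne_none _ (((ν.coherent i0 j).mp hcc).symm.trans hw)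
        cases hwa : μ.muW j with
        | none =>
          have hnem : μ.muM i ≠ some j := fun hcc =>
            Option.some_ne_none _ (((μ.coherent i j).mp hcc).symm.trans hwa)
          exact hblk i j hnem s t ⟨h1a, by rw [hvn j hwa]; exact h2⟩
        | some ia =>
          cases hwb : μ'.muW j with
          | none =>
            have hnem : μ'.muM i ≠ some j := fun hcc =>
              Option.some_ne_none _ (((μ'.coherent i j).mp hcc).symm.trans hwb)
            exact hblk' i j hnem s t ⟨h1b, by rw [hvn' j hwb]; exact h2⟩
          | some ib =>
            have hma : μ.muM ia = some j := (μ.coherent _ _).mpr hwa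
            have hmb : μ'.muM ib = some j := (μ'.coherent _ _).mpr hwb
            have hia : u ia < u' ia := by
              by_contra hcc
              push_neg at hcc
              exact hnoν ia ((hml ia hcc).trans hma)
            have hib : u' ib ≤ u ib := by
              by_contra hcc
              push_neg at hcc
              exact hnoν ib ((hmr ib hcc.le).trans hmb)
            exact noAbandon j ia ib hwa hwb hia hib
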